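/- Let X and Y be independent absolutely continuous real-valued random variables, each symmetrically distributed about θ, with cdfs F_X and G_Y and supports (θ − a, θ + a) and (θ − b, θ + b) respectively, where 0 < a ≤ b ≤ ∞. If P(X − θ ≤ t) ≥ P(Y − θ ≤ t) for all t ≥ 0, then P(|X − θ| < |Y − θ|) ≥ 2(G_Y(θ + a) − 1)^2 + 1/2 ≥ 1/2; in particular, X is Pitman closer to θ than Y. -/

import Mathlib

open MeasureTheory ProbabilityTheory
open scoped ENNReal

open Set
set_option linter.unusedSectionVars false

section Aux

variable {ρ : Measure ℝ} [IsProbabilityMeasure ρ] {θ : ℝ}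

lemma aux_Iio_eq_Iic (hat : ∀ t : ℝ, ρ {t} = 0) (t : ℝ) : ρ (Iio t) = ρ (Iic t) := by
  refine le_antisymm (measure_mono Iio_subset_Iic_self) ?_
  calc ρ (Iic t) = ρ (Iio t ∪ {t}) := by rw [Iio_union_right]
    _ ≤ ρ (Iio t) + ρ {t} := measure_union_le _ _
    _ = ρ (Iio t) := by rw [hat, add_zero]

lemma aux_sym_Iic
    (hsym : Measure.map (fun x => x - θ) ρ = Measure.map (fun x => θ - x) ρ) (s : ℝ) :
    ρ (Iic (θ - s)) = ρ (Ici (θ + s)) := by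
  have h1 : Measure.map (fun x => x - θ) ρ (Iic (-s)) = Measure.map (fun x => θ - x) ρ (Iic (-s)) := by
    rw [hsym]
  rw [Measure.map_apply (by fun_prop) measurableSet_Iic,
      Measure.map_apply (by fun_prop) measurableSet_Iic] at h1
  have e1 : (fun x : ℝ => x - θ) ⁻¹' Iic (-s) = Iic (θ - s) := by
    ext x; simp [Iic]; constructor <;> intro h <;> linarith
  have e2 : (fun x : ℝ => θ - x) ⁻¹' Iic (-s) = Ici (θ + s) := by
    ext x; simp [Iic, Ici]; constructor <;> intro h <;> linarith
  rwa [e1, e2] at h1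

lemma aux_sym_toReal (hat : ∀ t : ℝ, ρ {t} = 0)
    (hsym : Measure.map (fun x => x - θ) ρ = Measure.map (fun x => θ - x) ρ) (s : ℝ) :
    (ρ (Iic (θ - s))).toReal = 1 - (ρ (Iic (θ + s))).toReal := by
  rw [aux_sym_Iic hsym s]
  have : (Iio (θ + s))ᶜ = Ici (θ + s) := compl_Iio
  rw [← this, prob_compl_eq_one_sub measurableSet_Iio, aux_Iio_eq_Iic hat,
      ENNReal.toReal_sub_of_le prob_le_one ENNReal.one_ne_top, ENNReal.toReal_one]

lemma aux_interval_le (hat : ∀ t : ℝ, ρ {t} = 0)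
    (hsym : Measure.map (fun x => x - θ) ρ = Measure.map (fun x => θ - x) ρ)
    {s : ℝ} (hs : 0 ≤ s) :
    (ρ {w | |w - θ| ≤ s}).toReal = 2 * (ρ (Iic (θ + s))).toReal - 1 := by
  have hset : {w : ℝ | |w - θ| ≤ s} = Iic (θ + s) \ Iio (θ - s) := by
    ext x; simp [abs_le, Iic, Iio]; constructor <;> intro h <;> constructor <;> linarith [h.1, h.2]
  have hsub : Iio (θ - s) ⊆ Iic (θ + s) := fun x hx => by
    simp [Iio] at hx; simp [Iic]; linarith
  rw [hset, measure_diff hsub measurableSet_Iio.nullMeasurableSet (measure_ne_top ρ _),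
      ENNReal.toReal_sub_of_le (measure_mono hsub) (measure_ne_top ρ _),
      aux_Iio_eq_Iic hat, aux_sym_toReal hat hsym]
  ring

lemma aux_interval_lt (hat : ∀ t : ℝ, ρ {t} = 0)
    (hsym : Measure.map (fun x => x - θ) ρ = Measure.map (fun x => θ - x) ρ)
    {s : ℝ} (hs : 0 < s) :
    (ρ {w | |w - θ| < s}).toReal = 2 * (ρ (Iic (θ + s))).toReal - 1 := by
  have hset : {w : ℝ | |w - θ| < s} = Iio (θ + s) \ Iic (θ - s) := by
    ext x; simp [abs_lt, Iio, Iic]; constructor <;> intro h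
    · constructor <;> [linarith [h.2]; linarith [h.1]]
    · constructor <;> [linarith [h.2]; linarith [h.1]]
  have hsub : Iic (θ - s) ⊆ Iio (θ + s) := fun x hx => by
    simp [Iic] at hx; simp [Iio]; linarith
  rw [hset, measure_diff hsub measurableSet_Iic.nullMeasurableSet (measure_ne_top ρ _),
      ENNReal.toReal_sub_of_le (measure_mono hsub) (measure_ne_top ρ _),
      aux_Iio_eq_Iic hat, aux_sym_toReal hat hsym]
  ring

end Aux

/-- Lemma 2 and its proof.  Let `X` and `Y` be independent absolutely
continuous real random variables, each symmetric about `θ`, with cdfs `F` and `G` and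
supports `(θ - a, θ + a)` and `(θ - b, θ + b)` where `0 < a ≤ b ≤ ∞`.  If
`P(X - θ ≤ t) ≥ P(Y - θ ≤ t)` for all `t ≥ 0` then
`P(|X - θ| < |Y - θ|) ≥ 2 (G_Y(θ + a) - 1)² + 1/2 ≥ 1/2`; in particular `X` is Pitman
closer to `θ` than `Y`.  (Here `G_Y(θ + a)` is written as `P(Y ≤ θ + a)` computed in
`EReal`, to allow `a = ∞`.) -/
theorem pitman_closer_of_stochastic_comparison
    {Ω : Type*} [MeasurableSpace Ω] (μ : Measure Ω) [IsProbabilityMeasure μ]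
    (X Y : Ω → ℝ) (hXmeas : Measurable X) (hYmeas : Measurable Y)
    (hindep : IndepFun X Y μ) (θ : ℝ)
    -- `X` and `Y` are symmetrically distributed about `θ`
    (hXsym : Measure.map (fun ω => X ω - θ) μ = Measure.map (fun ω => θ - X ω) μ)
    (hYsym : Measure.map (fun ω => Y ω - θ) μ = Measure.map (fun ω => θ - Y ω) μ)
    -- absolute continuity, with cdfs `F` and `G`
    (hXac : HasPDF X μ) (hYac : HasPDF Y μ)
    (F G : ℝ → ℝ)
    (hF : ∀ t, F t = (μ {ω | X ω ≤ t}).toReal)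
    (hG : ∀ t, G t = (μ {ω | Y ω ≤ t}).toReal)
    -- supports `(θ - a, θ + a)` and `(θ - b, θ + b)` with `0 < a ≤ b ≤ ∞`
    (a b : EReal) (ha : (0 : EReal) < a) (hab : a ≤ b)
    (hsuppX : ∀ᵐ ω ∂μ, ((|X ω - θ| : ℝ) : EReal) < a)
    (hsuppY : ∀ᵐ ω ∂μ, ((|Y ω - θ| : ℝ) : EReal) < b)
    -- stochastic comparison: `P(X - θ ≤ t) ≥ P(Y - θ ≤ t)` for all `t ≥ 0`
    (hcomp : ∀ t : ℝ, 0 ≤ t → F (θ + t) ≥ G (θ + t)) :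
    (μ {ω | |X ω - θ| < |Y ω - θ|}).toReal
        ≥ 2 * ((μ {ω | ((Y ω : ℝ) : EReal) ≤ (θ : ℝ) + a}).toReal - 1) ^ 2 + 1 / 2
      ∧ 2 * ((μ {ω | ((Y ω : ℝ) : EReal) ≤ (θ : ℝ) + a}).toReal - 1) ^ 2 + 1 / 2
          ≥ 1 / 2
      ∧ (μ {ω | |X ω - θ| < |Y ω - θ|}).toReal ≥ 1 / 2 := by
  classical
  set ν := Measure.map X μ with hν
  set ρ := Measure.map Y μ with hρ
  haveI : IsProbabilityMeasure ν := Measure.isProbabilityMeasure_map hXmeas.aemeasurable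
  haveI : IsProbabilityMeasure ρ := Measure.isProbabilityMeasure_map hYmeas.aemeasurable
  have hatν : ∀ t : ℝ, ν {t} = 0 := fun t =>
    hXac.absolutelyContinuous (Real.volume_singleton)
  have hatρ : ∀ t : ℝ, ρ {t} = 0 := fun t =>
    hYac.absolutelyContinuous (Real.volume_singleton)
  have hsymν : Measure.map (fun x => x - θ) ν = Measure.map (fun x => θ - x) ν := by
    rw [hν, Measure.map_map (by fun_prop) hXmeas, Measure.map_map (by fun_prop) hXmeas]
    exact hXsym
  have hsymρ : Measure.map (fun x => x - θ) ρ = Measure.map (fun x => θ - x) ρ := by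
    rw [hρ, Measure.map_map (by fun_prop) hYmeas, Measure.map_map (by fun_prop) hYmeas]
    exact hYsym
  have hFν : ∀ t, F t = (ν (Iic t)).toReal := fun t => by
    rw [hF, hν, Measure.map_apply hXmeas measurableSet_Iic]; rfl
  have hGρ : ∀ t, G t = (ρ (Iic t)).toReal := fun t => by
    rw [hG, hρ, Measure.map_apply hYmeas measurableSet_Iic]; rfl
  -- the "support" set S
  set S : Set ℝ := {v | ((|v - θ| : ℝ) : EReal) < a} with hSdef
  have hSmeas : MeasurableSet S := by
    have hm : Measurable fun v : ℝ => ((|v - θ| : ℝ) : EReal) :=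
      measurable_coe_real_ereal.comp ((measurable_id.sub_const θ).abs)
    exact measurableSet_lt hm measurable_const
  -- main probability as an integral
  have hTmeas0 : MeasurableSet {p : ℝ × ℝ | |p.1 - θ| < |p.2 - θ|} := by
    apply measurableSet_lt <;> fun_prop
  have hpair : Measure.map (fun ω => (X ω, Y ω)) μ = ν.prod ρ :=
    (indepFun_iff_map_prod_eq_prod_map_map hXmeas.aemeasurable hYmeas.aemeasurable).mp hindep
  have hmain : μ {ω | |X ω - θ| < |Y ω - θ|}
      = ∫⁻ v, ν {u | |u - θ| < |v - θ|} ∂ρ := by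
    have h1 : μ {ω | |X ω - θ| < |Y ω - θ|}
        = Measure.map (fun ω => (X ω, Y ω)) μ {p : ℝ × ℝ | |p.1 - θ| < |p.2 - θ|} := by
      rw [Measure.map_apply (hXmeas.prodMk hYmeas) hTmeas0]; rfl
    rw [h1, hpair, Measure.prod_apply_symm hTmeas0]
    rfl
  -- support of X
  have hXa : ν S = 1 := by
    rw [hν, Measure.map_apply hXmeas hSmeas]
    rw [← prob_compl_eq_zero_iff (hSmeas.preimage hXmeas)]
    have := hsuppX
    rw [ae_iff] at this
    exact this
  -- lower bound off S
  have hk1 : ∀ v ∉ S, (1 : ℝ≥0∞) ≤ ν {u | |u - θ| < |v - θ|} := by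
    intro v hv
    rw [← hXa]
    apply measure_mono
    intro u hu
    simp only [hSdef, mem_setOf_eq] at hu ⊢
    have h2 : ((|u - θ| : ℝ) : EReal) < ((|v - θ| : ℝ) : EReal) :=
      lt_of_lt_of_le hu (not_lt.mp hv)
    exact_mod_cast h2
  -- lower bound on S
  have hk2 : ∀ v ∈ S, ρ {w | |w - θ| ≤ |v - θ|} ≤ ν {u | |u - θ| < |v - θ|} := by
    intro v hv
    rcases eq_or_lt_of_le (abs_nonneg (v - θ)) with h0 | h0
    · have hset : {w : ℝ | |w - θ| ≤ |v - θ|} = {θ} := by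
        ext w
        simp only [mem_setOf_eq, ← h0, mem_singleton_iff]
        constructor
        · intro h; have := abs_nonneg (w - θ); have : |w - θ| = 0 := le_antisymm h this
          have := abs_eq_zero.mp this; linarith
        · intro h; simp [h]
      rw [hset, hatρ]
      exact zero_le
    · have hlt : ((|v - θ| : ℝ) : EReal) < a := hv
      have h1 := aux_interval_lt hatν hsymν h0
      have h2 := aux_interval_le hatρ hsymρ h0.le
      have hFG : (ρ (Iic (θ + |v - θ|))).toReal ≤ (ν (Iic (θ + |v - θ|))).toReal := by
        have h3 := hcomp (|v - θ|) h0.le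
        rw [hFν, hGρ] at h3
        exact h3
      rw [← ENNReal.toReal_le_toReal (measure_ne_top _ _) (measure_ne_top _ _), h1, h2]
      linarith
  -- the diagonal set T
  set T : Set (ℝ × ℝ) := {p | p.1 ∈ S ∧ |p.2 - θ| ≤ |p.1 - θ|} with hTdef
  have hTm : MeasurableSet T := by
    apply (hSmeas.preimage measurable_fst).inter
    exact measurableSet_le (by fun_prop : Measurable fun p : ℝ × ℝ => |p.2 - θ|)
      (by fun_prop : Measurable fun p : ℝ × ℝ => |p.1 - θ|)
  have hTeq : ∫⁻ v in S, ρ {w | |w - θ| ≤ |v - θ|} ∂ρ = (ρ.prod ρ) T := by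
    rw [Measure.prod_apply hTm, ← lintegral_indicator hSmeas]
    apply lintegral_congr
    intro v
    by_cases hv : v ∈ S
    · rw [indicator_of_mem hv]
      congr 1
      ext w
      simp [hTdef, hv]
    · rw [indicator_of_notMem hv]
      have : Prod.mk v ⁻¹' T = ∅ := by
        ext w; simp [hTdef, hv]
      rw [this, measure_empty]
  have hswap : (ρ.prod ρ) (Prod.swap ⁻¹' T) = (ρ.prod ρ) T := by
    conv_rhs => rw [← Measure.prod_swap]
    rw [Measure.map_apply measurable_swap hTm]
  have hcover : S ×ˢ S ⊆ T ∪ Prod.swap ⁻¹' T := by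
    rintro ⟨v, w⟩ ⟨hv, hw⟩
    rcases le_total |w - θ| |v - θ| with h | h
    · exact Or.inl ⟨hv, h⟩
    · exact Or.inr ⟨hw, h⟩
  have hTbound : ρ S * ρ S ≤ 2 * (ρ.prod ρ) T := by
    calc ρ S * ρ S = (ρ.prod ρ) (S ×ˢ S) := (Measure.prod_prod _ _).symm
      _ ≤ (ρ.prod ρ) (T ∪ Prod.swap ⁻¹' T) := measure_mono hcover
      _ ≤ (ρ.prod ρ) T + (ρ.prod ρ) (Prod.swap ⁻¹' T) := measure_union_le _ _
      _ = 2 * (ρ.prod ρ) T := by rw [hswap, two_mul]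
  -- split the integral
  have hsplit : (ρ.prod ρ) T + ρ Sᶜ ≤ μ {ω | |X ω - θ| < |Y ω - θ|} := by
    rw [hmain, ← lintegral_add_compl (fun v => ν {u | |u - θ| < |v - θ|}) hSmeas]
    apply add_le_add
    · rw [← hTeq]
      exact setLIntegral_mono' hSmeas hk2
    · rw [← setLIntegral_one Sᶜ]
      exact setLIntegral_mono' hSmeas.compl (fun v hv => hk1 v hv)
  -- pass to real numbers
  set p : ℝ := (ρ S).toReal with hp
  set q : ℝ := ((ρ.prod ρ) T).toReal with hq
  have hProdFin : (ρ.prod ρ) T ≠ ⊤ := measure_ne_top _ _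
  have hmainR : q + (1 - p) ≤ (μ {ω | |X ω - θ| < |Y ω - θ|}).toReal := by
    have h1 := ENNReal.toReal_mono (measure_ne_top μ _) hsplit
    rw [ENNReal.toReal_add hProdFin (measure_ne_top _ _)] at h1
    have h2 : (ρ Sᶜ).toReal = 1 - p := by
      rw [prob_compl_eq_one_sub hSmeas,
        ENNReal.toReal_sub_of_le prob_le_one ENNReal.one_ne_top, ENNReal.toReal_one]
    rwa [h2] at h1
  have hqbound : p * p ≤ 2 * q := by
    have h1 := ENNReal.toReal_mono (by
      exact ENNReal.mul_ne_top (by norm_num) hProdFin) hTbound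
    rw [ENNReal.toReal_mul, ENNReal.toReal_mul] at h1
    simpa using h1
  -- relation between p and c
  set c : ℝ := (μ {ω | ((Y ω : ℝ) : EReal) ≤ (θ : ℝ) + a}).toReal with hc
  have hcρ : c = (ρ {v : ℝ | ((v : ℝ) : EReal) ≤ (θ : ℝ) + a}).toReal := by
    rw [hc, hρ, Measure.map_apply hYmeas]
    · rfl
    · exact measurableSet_le measurable_coe_real_ereal measurable_const
  have hpc : p = 2 * c - 1 := by
    by_cases htop : a = ⊤
    · have hS1 : S = univ := by
        ext v; simp [hSdef, htop]
      have hc1 : {v : ℝ | ((v : ℝ) : EReal) ≤ (θ : ℝ) + a} = univ := by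
        ext v
        simp only [mem_setOf_eq, mem_univ, iff_true, htop]
        rw [EReal.add_top_of_ne_bot (EReal.coe_ne_bot θ)]
        exact le_top
      rw [hp, hcρ, hS1, hc1, measure_univ]
      norm_num
    · have hbot : a ≠ ⊥ := ha.ne_bot
      obtain ⟨a₀, ha₀⟩ : ∃ a₀ : ℝ, a = (a₀ : EReal) := ⟨a.toReal, (EReal.coe_toReal htop hbot).symm⟩
      have ha₀pos : 0 < a₀ := by
        rw [ha₀] at ha
        exact_mod_cast ha
      have hS1 : S = {v | |v - θ| < a₀} := by
        ext v
        simp only [hSdef, mem_setOf_eq, ha₀]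
        exact EReal.coe_lt_coe_iff
      have hc1 : {v : ℝ | ((v : ℝ) : EReal) ≤ (θ : ℝ) + a} = Iic (θ + a₀) := by
        ext v
        simp only [mem_setOf_eq, ha₀, mem_Iic, ← EReal.coe_add]
        exact EReal.coe_le_coe_iff
      rw [hp, hcρ, hS1, hc1, aux_interval_lt hatρ hsymρ ha₀pos]
  -- finish
  have hq2 : p ^ 2 / 2 ≤ q := by nlinarith
  have hgoal1 : (μ {ω | |X ω - θ| < |Y ω - θ|}).toReal ≥ 2 * (c - 1) ^ 2 + 1 / 2 := by
    have hp1 : p ≤ 1 := by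
      rw [hp]
      exact ENNReal.toReal_mono ENNReal.one_ne_top prob_le_one |>.trans_eq ENNReal.toReal_one
    nlinarith [hmainR, hq2]
  refine ⟨hgoal1, by nlinarith, by nlinarith [hgoal1]⟩
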